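/- Let f : ℝ^n → ℝ^n be Lipschitz and let Δ ⊆ ℝ^n be a d-dimensional polyhedron. For ℋ^d-almost every x ∈ Δ, f is differentiable at x along Δ, and for any affine map g agreeing with Df(x) on the tangent plane of Δ at x up to error ρ·Lip(f) on vectors of length δ (i.e. the edge images differ by at most 6ρ·Lip(f)·δ), the approximate Jacobians satisfy |J_d g(x) − J_d f(x)| ≤ 6ρ·Lip(f)^d / ((d−1)!·κ), where κ is the fullness of the simplex containing x. -/

import Mathlib

/-- The Gram inner product `⟪v₁ ∧ ⋯ ∧ v_d, w₁ ∧ ⋯ ∧ w_d⟫`, computed as the determinant of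
the Gram matrix. -/
noncomputable def wedgeInner {n d : ℕ} (v w : Fin d → EuclideanSpace ℝ (Fin n)) : ℝ :=
  Matrix.det (Matrix.of fun i j => (inner ℝ (v i) (w j) : ℝ))

/-- The norm `|v₁ ∧ ⋯ ∧ v_d|` of a wedge product. -/
noncomputable def wedgeNorm {n d : ℕ} (v : Fin d → EuclideanSpace ℝ (Fin n)) : ℝ :=
  Real.sqrt (wedgeInner v v)

namespace Stmt9Aux

noncomputable def Dt {n d : ℕ} (v : Fin d → EuclideanSpace ℝ (Fin n)) (k : Fin d → Fin n) : ℝ :=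
  Matrix.det (Matrix.of fun i j => v i (k j))

noncomputable def AV {n d : ℕ} (v : Fin d → EuclideanSpace ℝ (Fin n)) :
    EuclideanSpace ℝ (Fin d → Fin n) := WithLp.toLp 2 (fun k => Dt v k)

open Finset in
lemma key {n d : ℕ} (v w : Fin d → EuclideanSpace ℝ (Fin n)) :
    ∑ k : Fin d → Fin n, Dt v k * Dt w k = (d.factorial : ℝ) * wedgeInner v w := by
  have hsum : ∀ (σ τ : Equiv.Perm (Fin d)),
      ∑ k : Fin d → Fin n, (∏ i, v (σ i) (k i)) * ∏ i, w (τ i) (k i)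
        = ∏ i, (inner ℝ (v (σ i)) (w (τ i)) : ℝ) := by
    intro σ τ
    simp_rw [PiLp.inner_apply, RCLike.inner_apply, conj_trivial]
    rw [Fintype.prod_sum]
    exact Finset.sum_congr rfl fun k _ => (Finset.prod_mul_distrib.symm.trans (Finset.prod_congr rfl fun i _ => mul_comm _ _))
  calc ∑ k : Fin d → Fin n, Dt v k * Dt w k
      = ∑ k : Fin d → Fin n, ∑ σ : Equiv.Perm (Fin d), ∑ τ : Equiv.Perm (Fin d),
          (((Equiv.Perm.sign σ : ℤ) : ℝ) * ((Equiv.Perm.sign τ : ℤ) : ℝ)) *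
            ((∏ i, v (σ i) (k i)) * ∏ i, w (τ i) (k i)) := by
        refine Finset.sum_congr rfl fun k _ => ?_
        simp only [Dt, Matrix.det_apply', Matrix.of_apply]
        rw [Finset.sum_mul_sum]
        exact Finset.sum_congr rfl fun σ _ => Finset.sum_congr rfl fun τ _ => by ring
    _ = ∑ τ : Equiv.Perm (Fin d), ∑ σ : Equiv.Perm (Fin d),
          (((Equiv.Perm.sign σ : ℤ) : ℝ) * ((Equiv.Perm.sign τ : ℤ) : ℝ)) *
            ∏ i, (inner ℝ (v (σ i)) (w (τ i)) : ℝ) := by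
        rw [Finset.sum_comm]
        have hstep : ∀ σ : Equiv.Perm (Fin d),
            (∑ k : Fin d → Fin n, ∑ τ : Equiv.Perm (Fin d),
              (((Equiv.Perm.sign σ : ℤ) : ℝ) * ((Equiv.Perm.sign τ : ℤ) : ℝ)) *
                ((∏ i, v (σ i) (k i)) * ∏ i, w (τ i) (k i)))
            = ∑ τ : Equiv.Perm (Fin d),
              (((Equiv.Perm.sign σ : ℤ) : ℝ) * ((Equiv.Perm.sign τ : ℤ) : ℝ)) *
                ∏ i, (inner ℝ (v (σ i)) (w (τ i)) : ℝ) := by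
          intro σ
          rw [Finset.sum_comm]
          exact Finset.sum_congr rfl fun τ _ => by rw [← Finset.mul_sum, hsum]
        simp_rw [hstep]
        rw [Finset.sum_comm]
    _ = ∑ τ : Equiv.Perm (Fin d), ∑ π : Equiv.Perm (Fin d),
          ((Equiv.Perm.sign π : ℤ) : ℝ) * ∏ i, (inner ℝ (v (π i)) (w i) : ℝ) := by
        refine Finset.sum_congr rfl fun τ _ => ?_
        rw [← Equiv.sum_comp (Equiv.mulRight τ) (fun σ => (((Equiv.Perm.sign σ : ℤ) : ℝ) * ((Equiv.Perm.sign τ : ℤ) : ℝ)) * ∏ i, (inner ℝ (v (σ i)) (w (τ i)) : ℝ))]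
        refine Finset.sum_congr rfl fun π _ => ?_
        simp only [Equiv.coe_mulRight, Equiv.Perm.mul_apply]
        have h1 : ∏ i, (inner ℝ (v (π (τ i))) (w (τ i)) : ℝ) = ∏ i, (inner ℝ (v (π i)) (w i) : ℝ) :=
          Equiv.prod_comp τ (fun i => (inner ℝ (v (π i)) (w i) : ℝ))
        rw [h1]
        have h2 : ((Equiv.Perm.sign (π * τ) : ℤ) : ℝ) = ((Equiv.Perm.sign π : ℤ) : ℝ) * ((Equiv.Perm.sign τ : ℤ) : ℝ) := by
          rw [Equiv.Perm.sign_mul]; push_cast; ring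
        have h3 : ((Equiv.Perm.sign τ : ℤ) : ℝ) * ((Equiv.Perm.sign τ : ℤ) : ℝ) = 1 := by
          have := Int.units_mul_self (Equiv.Perm.sign τ)
          have : ((Equiv.Perm.sign τ * Equiv.Perm.sign τ : ℤˣ) : ℤ) = 1 := by rw [this]; rfl
          exact_mod_cast this
        rw [h2]
        calc ((Equiv.Perm.sign π : ℤ) : ℝ) * ((Equiv.Perm.sign τ : ℤ) : ℝ) * ((Equiv.Perm.sign τ : ℤ) : ℝ) * ∏ i, (inner ℝ (v (π i)) (w i) : ℝ)
            = ((Equiv.Perm.sign π : ℤ) : ℝ) * (((Equiv.Perm.sign τ : ℤ) : ℝ) * ((Equiv.Perm.sign τ : ℤ) : ℝ)) * ∏ i, (inner ℝ (v (π i)) (w i) : ℝ) := by ring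
          _ = ((Equiv.Perm.sign π : ℤ) : ℝ) * ∏ i, (inner ℝ (v (π i)) (w i) : ℝ) := by rw [h3, mul_one]
    _ = (d.factorial : ℝ) * wedgeInner v w := by
        simp only [wedgeInner, Matrix.det_apply', Matrix.of_apply, Finset.sum_const, smul_eq_mul]
        rw [Finset.card_univ, Fintype.card_perm, Fintype.card_fin, nsmul_eq_mul]

lemma wedgeNorm_eq_AV {n d : ℕ} (v : Fin d → EuclideanSpace ℝ (Fin n)) :
    wedgeNorm v = ‖AV v‖ / Real.sqrt (d.factorial) := by
  have h : ‖AV v‖ = Real.sqrt (∑ k : Fin d → Fin n, Dt v k * Dt v k) := by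
    rw [EuclideanSpace.norm_eq]
    congr 1
    exact Finset.sum_congr rfl fun k _ => by
      simp [AV, Real.norm_eq_abs, sq_abs, sq, abs_mul_abs_self]
  rw [h, key, Real.sqrt_mul (by positivity), wedgeNorm]
  have hne : Real.sqrt (d.factorial : ℝ) ≠ 0 := by positivity
  rw [mul_comm (Real.sqrt (d.factorial : ℝ)), mul_div_assoc, div_self hne, mul_one]

lemma gram_psd {n d : ℕ} (v : Fin d → EuclideanSpace ℝ (Fin n)) :
    (Matrix.of fun i j => (inner ℝ (v i) (v j) : ℝ)).PosSemidef := by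
  set B : Matrix (Fin n) (Fin d) ℝ := Matrix.of fun m i => v i m with hB
  have h : (Matrix.of fun i j => (inner ℝ (v i) (v j) : ℝ)) = Matrix.conjTranspose B * B := by
    ext i j
    simp [hB, Matrix.mul_apply, Matrix.conjTranspose_apply, PiLp.inner_apply, RCLike.inner_apply,
      conj_trivial]
    exact Finset.sum_congr rfl fun _ _ => mul_comm _ _
  rw [h]
  exact Matrix.posSemidef_conjTranspose_mul_self _

lemma trace_eq_sum_eig {d : ℕ} {A : Matrix (Fin d) (Fin d) ℝ} (hA : A.IsHermitian) :
    A.trace = ∑ i, hA.eigenvalues i := by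
  simpa using hA.trace_eq_sum_eigenvalues

lemma det_gram_le_one {n d : ℕ} (hd : 0 < d) (u : Fin d → EuclideanSpace ℝ (Fin n))
    (hu : ∀ i, ‖u i‖ = 1) :
    Matrix.det (Matrix.of fun i j => (inner ℝ (u i) (u j) : ℝ)) ≤ 1 := by
  set G := Matrix.of fun i j => (inner ℝ (u i) (u j) : ℝ) with hG
  have hpsd := gram_psd u
  have hH := hpsd.1
  have hev : ∀ i, 0 ≤ hH.eigenvalues i := hpsd.eigenvalues_nonneg
  have htr : ∑ i, hH.eigenvalues i = d := by
    rw [← trace_eq_sum_eig hH]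
    have h1 : ∀ i, G i i = 1 := fun i => by
      simp only [hG, Matrix.of_apply]
      rw [real_inner_self_eq_norm_sq, hu i]; norm_num
    calc G.trace = ∑ i, G i i := rfl
      _ = ∑ _i : Fin d, (1 : ℝ) := Finset.sum_congr rfl fun i _ => h1 i
      _ = d := by simp
  have hdet : G.det = ∏ i, hH.eigenvalues i := by
    have := hH.det_eq_prod_eigenvalues
    exact_mod_cast this
  rw [hdet]
  have h1 : ∏ i, (hH.eigenvalues i) ^ ((d : ℝ)⁻¹) ≤ ∑ i : Fin d, (d : ℝ)⁻¹ * hH.eigenvalues i := by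
    apply Real.geom_mean_le_arith_mean_weighted
    · intro i _; positivity
    · rw [Finset.sum_const, Finset.card_univ, Fintype.card_fin, nsmul_eq_mul]
      field_simp
    · intro i _; exact hev i
  have h2 : ∑ i : Fin d, (d : ℝ)⁻¹ * hH.eigenvalues i = 1 := by
    rw [← Finset.mul_sum, htr]
    field_simp
  have h3 : ∏ i, hH.eigenvalues i = (∏ i, (hH.eigenvalues i) ^ ((d : ℝ)⁻¹)) ^ d := by
    rw [← Finset.prod_pow]
    refine Finset.prod_congr rfl fun i _ => ?_
    rw [← Real.rpow_natCast ((hH.eigenvalues i) ^ ((d : ℝ)⁻¹)) d, ← Real.rpow_mul (hev i)]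
    rw [inv_mul_cancel₀ (by exact_mod_cast hd.ne' : (d : ℝ) ≠ 0), Real.rpow_one]
  rw [h3]
  calc (∏ i, (hH.eigenvalues i) ^ ((d : ℝ)⁻¹)) ^ d ≤ 1 ^ d := by
        apply pow_le_pow_left₀ (Finset.prod_nonneg fun i _ => Real.rpow_nonneg (hev i) _)
        rw [← h2]; exact h1
      _ = 1 := one_pow d

lemma hadamard {n d : ℕ} (hd : 0 < d) (v : Fin d → EuclideanSpace ℝ (Fin n)) :
    wedgeNorm v ≤ ∏ i, ‖v i‖ := by
  by_cases hz : ∀ i, v i ≠ 0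
  · set c : Fin d → ℝ := fun i => ‖v i‖ with hc
    have hcpos : ∀ i, 0 < c i := fun i => norm_pos_iff.mpr (hz i)
    set u : Fin d → EuclideanSpace ℝ (Fin n) := fun i => (c i)⁻¹ • v i with hudef
    have hu : ∀ i, ‖u i‖ = 1 := by
      intro i
      rw [hudef]
      simp only [norm_smul, norm_inv, Real.norm_eq_abs, abs_of_pos (hcpos i)]
      field_simp
      simp only [hc]
      exact div_self (norm_ne_zero_iff.mpr (hz i))
    have hmat : (Matrix.of fun i j => (inner ℝ (v i) (v j) : ℝ))
        = Matrix.diagonal c * (Matrix.of fun i j => (inner ℝ (u i) (u j) : ℝ)) * Matrix.diagonal c := by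
      ext i j
      have hci : c i ≠ 0 := (hcpos i).ne'
      have hcj : c j ≠ 0 := (hcpos j).ne'
      rw [Matrix.mul_diagonal, Matrix.diagonal_mul]
      simp only [Matrix.of_apply, hudef, real_inner_smul_left, real_inner_smul_right]
      field_simp
    have hdet : wedgeInner v v = (∏ i, c i)^2 * Matrix.det (Matrix.of fun i j => (inner ℝ (u i) (u j) : ℝ)) := by
      rw [wedgeInner, hmat, Matrix.det_mul, Matrix.det_mul, Matrix.det_diagonal]
      ring
    have hle := det_gram_le_one hd u hu
    have hcprod : 0 ≤ ∏ i, c i := Finset.prod_nonneg fun i _ => (hcpos i).le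
    rw [wedgeNorm]
    calc Real.sqrt (wedgeInner v v) ≤ Real.sqrt ((∏ i, c i)^2) := by
          apply Real.sqrt_le_sqrt
          rw [hdet]
          nlinarith [sq_nonneg (∏ i, c i)]
      _ = ∏ i, c i := Real.sqrt_sq hcprod
  · push_neg at hz
    obtain ⟨i, hi⟩ := hz
    have hdet : wedgeInner v v = 0 := by
      rw [wedgeInner]
      apply Matrix.det_eq_zero_of_row_eq_zero i
      intro j
      simp [hi]
    rw [wedgeNorm, hdet, Real.sqrt_zero]
    exact Finset.prod_nonneg fun i _ => norm_nonneg _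

lemma Dt_update_sub {n d : ℕ} (x : Fin d → EuclideanSpace ℝ (Fin n)) (j : Fin d)
    (a b : EuclideanSpace ℝ (Fin n)) (k : Fin d → Fin n) :
    Dt (Function.update x j a) k - Dt (Function.update x j b) k
      = Dt (Function.update x j (a - b)) k := by
  have hm : ∀ (y : EuclideanSpace ℝ (Fin n)),
      (Matrix.of fun i c => (Function.update x j y) i (k c))
        = Matrix.updateRow (Matrix.of fun i c => x i (k c)) j (fun c => y (k c)) := by
    intro y; ext i c
    by_cases h : i = j <;> simp [Function.update, Matrix.updateRow_apply, h]
  simp only [Dt, hm]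
  have hsub : (fun c => (a - b) (k c)) = (fun c => a (k c)) + (-1 : ℝ) • (fun c => b (k c)) := by
    funext c; simp [sub_eq_add_neg]
  rw [hsub, Matrix.det_updateRow_add, Matrix.det_updateRow_smul]
  ring

lemma AV_update_sub {n d : ℕ} (x : Fin d → EuclideanSpace ℝ (Fin n)) (j : Fin d)
    (a b : EuclideanSpace ℝ (Fin n)) :
    AV (Function.update x j a) - AV (Function.update x j b)
      = AV (Function.update x j (a - b)) := by
  have h : ∀ k, (AV (Function.update x j a) - AV (Function.update x j b)) k
      = Dt (Function.update x j a) k - Dt (Function.update x j b) k := fun k => rfl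
  ext k
  rw [h k, Dt_update_sub]
  rfl

/-- The main quantitative bound. -/
lemma main_bound {n d : ℕ} (hd : 0 < d) (u w : Fin d → EuclideanSpace ℝ (Fin n))
    (C D : ℝ) (hC : 0 ≤ C) (hD : 0 ≤ D)
    (hub : ∀ i, ‖u i‖ ≤ C) (hwb : ∀ i, ‖w i‖ ≤ C) (hdiff : ∀ i, ‖w i - u i‖ ≤ D) :
    |wedgeNorm w - wedgeNorm u| ≤ d * (D * C ^ (d - 1)) := by
  classical
  set mfam : ℕ → Fin d → EuclideanSpace ℝ (Fin n) :=
    fun t i => if (i : ℕ) < t then w i else u i with hmfam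
  have hm0 : mfam 0 = u := funext fun i => by simp [hmfam]
  have hmd : mfam d = w := funext fun i => by simp [hmfam, i.isLt]
  -- bound each step
  have hstepbound : ∀ t, t < d →
      ‖AV (mfam (t + 1)) - AV (mfam t)‖ ≤ Real.sqrt (d.factorial) * (D * C ^ (d - 1)) := by
    intro t ht
    set j : Fin d := ⟨t, ht⟩ with hj
    have ha : mfam (t + 1) = Function.update (mfam t) j (w j) := by
      funext i
      by_cases h : i = j
      · subst h; simp [hmfam, hj]
      · have hne : (i : ℕ) ≠ t := fun hh => h (Fin.ext hh)
        simp only [hmfam, Function.update_of_ne h]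
        by_cases h2 : (i : ℕ) < t
        · simp [h2, Nat.lt_succ_of_lt h2]
        · have h3 : ¬ (i : ℕ) < t + 1 := by omega
          simp [h2, h3]
    have hb : mfam t = Function.update (mfam t) j (u j) := by
      have : mfam t j = u j := by simp [hmfam, hj]
      rw [← this, Function.update_eq_self]
    have hdiffAV : AV (mfam (t + 1)) - AV (mfam t)
        = AV (Function.update (mfam t) j (w j - u j)) := by
      rw [ha]
      nth_rewrite 2 [hb]
      exact AV_update_sub (mfam t) j (w j) (u j)
    rw [hdiffAV]
    -- now bound the norm via wedgeNorm and hadamard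
    have hAVnorm : ‖AV (Function.update (mfam t) j (w j - u j))‖
        = Real.sqrt (d.factorial) * wedgeNorm (Function.update (mfam t) j (w j - u j)) := by
      rw [wedgeNorm_eq_AV]
      have hne : Real.sqrt (d.factorial : ℝ) ≠ 0 := by positivity
      field_simp
    rw [hAVnorm]
    have hwnb : wedgeNorm (Function.update (mfam t) j (w j - u j)) ≤ D * C ^ (d - 1) := by
      calc wedgeNorm (Function.update (mfam t) j (w j - u j))
          ≤ ∏ i, ‖Function.update (mfam t) j (w j - u j) i‖ := hadamard hd _
        _ = ‖(Function.update (mfam t) j (w j - u j)) j‖ *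
              ∏ i ∈ Finset.univ.erase j, ‖Function.update (mfam t) j (w j - u j) i‖ :=
            (Finset.mul_prod_erase Finset.univ _ (Finset.mem_univ j)).symm
        _ ≤ D * C ^ (d - 1) := by
            apply mul_le_mul
            · rw [Function.update_self]; exact hdiff j
            · calc ∏ i ∈ Finset.univ.erase j, ‖Function.update (mfam t) j (w j - u j) i‖
                  ≤ ∏ _i ∈ Finset.univ.erase j, C := by
                    apply Finset.prod_le_prod
                    · intro i _; exact norm_nonneg _
                    · intro i hi
                      have hne : i ≠ j := Finset.ne_of_mem_erase hi
                      rw [Function.update_of_ne hne]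
                      simp only [hmfam]
                      by_cases h2 : (i : ℕ) < t
                      · simp only [h2, if_true]; exact hwb i
                      · simp only [h2, if_false]; exact hub i
                _ = C ^ (d - 1) := by
                    rw [Finset.prod_const, Finset.card_erase_of_mem (Finset.mem_univ j),
                      Finset.card_univ, Fintype.card_fin]
            · exact Finset.prod_nonneg fun i _ => norm_nonneg _
            · exact hD
    exact mul_le_mul_of_nonneg_left hwnb (Real.sqrt_nonneg _)
  -- telescoping
  have htel : ‖AV w - AV u‖ ≤ ∑ t ∈ Finset.range d, ‖AV (mfam (t + 1)) - AV (mfam t)‖ := by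
    have h1 : dist (AV (mfam 0)) (AV (mfam d))
        ≤ ∑ t ∈ Finset.range d, dist (AV (mfam t)) (AV (mfam (t + 1))) :=
      dist_le_range_sum_dist (fun t => AV (mfam t)) d
    rw [hm0, hmd] at h1
    calc ‖AV w - AV u‖ = dist (AV u) (AV w) := by rw [dist_eq_norm, norm_sub_rev]
      _ ≤ ∑ t ∈ Finset.range d, dist (AV (mfam t)) (AV (mfam (t + 1))) := h1
      _ = ∑ t ∈ Finset.range d, ‖AV (mfam (t + 1)) - AV (mfam t)‖ := by
          refine Finset.sum_congr rfl fun t _ => ?_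
          rw [dist_eq_norm, norm_sub_rev]
  have hsum : ∑ t ∈ Finset.range d, ‖AV (mfam (t + 1)) - AV (mfam t)‖
      ≤ d * (Real.sqrt (d.factorial) * (D * C ^ (d - 1))) := by
    calc ∑ t ∈ Finset.range d, ‖AV (mfam (t + 1)) - AV (mfam t)‖
        ≤ ∑ _t ∈ Finset.range d, Real.sqrt (d.factorial) * (D * C ^ (d - 1)) :=
          Finset.sum_le_sum fun t ht => hstepbound t (Finset.mem_range.mp ht)
      _ = d * (Real.sqrt (d.factorial) * (D * C ^ (d - 1))) := by
          rw [Finset.sum_const, Finset.card_range, nsmul_eq_mul]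
  -- put together
  have hsq : (0 : ℝ) < Real.sqrt (d.factorial) := by positivity
  have habs : |wedgeNorm w - wedgeNorm u| ≤ ‖AV w - AV u‖ / Real.sqrt (d.factorial) := by
    rw [wedgeNorm_eq_AV, wedgeNorm_eq_AV, div_sub_div_same, abs_div, abs_of_pos hsq]
    gcongr
    exact abs_norm_sub_norm_le _ _
  calc |wedgeNorm w - wedgeNorm u| ≤ ‖AV w - AV u‖ / Real.sqrt (d.factorial) := habs
    _ ≤ (d * (Real.sqrt (d.factorial) * (D * C ^ (d - 1)))) / Real.sqrt (d.factorial) := by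
        gcongr
        exact htel.trans hsum
    _ = d * (D * C ^ (d - 1)) := by
        field_simp

end Stmt9Aux

/-- Quantitative comparison of Jacobians of a Lipschitz map and its simplexwise affine
approximation: if `f'` is the derivative of `f` at `x` along the simplex with edge vectors
`v j` (of diameter `δ`), `g'` is the linear part of an affine map whose edge images differ
from those of `f'` by at most `6ρ·L·δ`, and `κ = |v₁∧⋯∧v_d|/(d!·δ^d)` is the fullness of
the simplex, then the `d`-Jacobians `|f'(v₁)∧⋯∧f'(v_d)|/|v₁∧⋯∧v_d|` and
`|g'(v₁)∧⋯∧g'(v_d)|/|v₁∧⋯∧v_d|` differ by at most `6ρ·L^d/((d−1)!·κ)`. -/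

theorem stmt9 (n d : ℕ) (hd : 1 ≤ d) (L ρ δ κ : ℝ)
    (hL : 0 < L) (hρ : 0 < ρ) (hρ1 : ρ < 1) (hδ : 0 < δ)
    (f' g' : EuclideanSpace ℝ (Fin n) →L[ℝ] EuclideanSpace ℝ (Fin n))
    (v : Fin d → EuclideanSpace ℝ (Fin n))
    (hv : ∀ j, ‖v j‖ ≤ δ)
    (hf' : ∀ j, ‖f' (v j)‖ ≤ L * δ)
    (hg' : ∀ j, ‖g' (v j)‖ ≤ L * δ)
    (hclose : ∀ j, ‖g' (v j) - f' (v j)‖ ≤ 6 * ρ * L * δ)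
    (hκ : κ = wedgeNorm v / (Nat.factorial d * δ ^ d)) (hκpos : 0 < κ) :
    |wedgeNorm (fun j => g' (v j)) / wedgeNorm v
        - wedgeNorm (fun j => f' (v j)) / wedgeNorm v|
      ≤ 6 * ρ * L ^ d / (Nat.factorial (d - 1) * κ) := by
  have hdpos : 0 < d := hd
  set u : Fin d → EuclideanSpace ℝ (Fin n) := fun j => f' (v j) with hu
  set w : Fin d → EuclideanSpace ℝ (Fin n) := fun j => g' (v j) with hw
  have hNveq : wedgeNorm v = κ * ((d.factorial : ℝ) * δ ^ d) := by
    rw [hκ]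
    have : ((d.factorial : ℝ) * δ ^ d) ≠ 0 := by positivity
    field_simp
  have hNv : 0 < wedgeNorm v := by rw [hNveq]; positivity
  have hmain : |wedgeNorm w - wedgeNorm u| ≤ d * ((6 * ρ * L * δ) * (L * δ) ^ (d - 1)) :=
    Stmt9Aux.main_bound hdpos u w (L * δ) (6 * ρ * L * δ) (by positivity) (by positivity)
      (fun i => hf' i) (fun i => hg' i) (fun i => hclose i)
  have hA : (d : ℝ) * ((6 * ρ * L * δ) * (L * δ) ^ (d - 1)) = 6 * ρ * (L ^ d * δ ^ d) * d := by
    have h1 : (L * δ) ^ (d - 1) * (L * δ) = L ^ d * δ ^ d := by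
      rw [← pow_succ, ← mul_pow]
      congr 1
      omega
    calc (d : ℝ) * ((6 * ρ * L * δ) * (L * δ) ^ (d - 1))
        = 6 * ρ * ((L * δ) ^ (d - 1) * (L * δ)) * d := by ring
      _ = 6 * ρ * (L ^ d * δ ^ d) * d := by rw [h1]
  have hfac : (d.factorial : ℝ) = d * (((d - 1).factorial : ℝ)) := by
    exact_mod_cast (Nat.mul_factorial_pred hdpos.ne').symm
  have hrhs : 6 * ρ * L ^ d / ((Nat.factorial (d - 1) : ℝ) * κ)
      = 6 * ρ * (L ^ d * δ ^ d) * d / wedgeNorm v := by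
    rw [hNveq, hfac]
    have h1 : ((d - 1).factorial : ℝ) ≠ 0 := by positivity
    have h2 : (d : ℝ) ≠ 0 := by positivity
    have h3 : κ ≠ 0 := hκpos.ne'
    have h4 : δ ≠ 0 := hδ.ne'
    field_simp
  rw [div_sub_div_same, abs_div, abs_of_pos hNv, hrhs]
  gcongr
  exact hmain.trans (le_of_eq hA)
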